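/- Let K be a field of characteristic 2 and let P = K[X,Y] be the polynomial algebra in two variables with the Hamiltonian Poisson bracket {f,g} = (∂f/∂X)(∂g/∂Y) − (∂f/∂Y)(∂g/∂X). Then P is solvable of length 3 (that is, δ_3(P) = 0 and δ_2(P) ≠ 0), but P is not strongly solvable (that is, δ̃_s(P) ≠ 0 for every s ≥ 0). -/

import Mathlib

open MvPolynomial

/-- The Hamiltonian Poisson bracket on `K[X,Y]`:
`{f, g} = (∂f/∂X)(∂g/∂Y) − (∂f/∂Y)(∂g/∂X)`. -/
noncomputable def hamBracket {K : Type*} [Field K] (f g : MvPolynomial (Fin 2) K) :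
    MvPolynomial (Fin 2) K :=
  pderiv 0 f * pderiv 1 g - pderiv 1 f * pderiv 0 g

/-- The derived series of `K[X,Y]` under the Hamiltonian bracket: `δ 0` is everything and
`δ (n+1)` is the `K`-span of all brackets `{a, b}` with `a, b ∈ δ n`. -/
noncomputable def hamDerivedSeries (K : Type*) [Field K] :
    ℕ → Submodule K (MvPolynomial (Fin 2) K)
  | 0 => ⊤
  | n + 1 => Submodule.span K
      {x | ∃ a ∈ hamDerivedSeries K n, ∃ b ∈ hamDerivedSeries K n, x = hamBracket a b}

/-- The upper derived series of `K[X,Y]` under the Hamiltonian bracket: `δ̃ 0` is everything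
and `δ̃ (n+1)` is the `K`-span of all products `{a, b} · c` with `a, b ∈ δ̃ n` and `c`
arbitrary. -/
noncomputable def hamUpperDerivedSeries (K : Type*) [Field K] :
    ℕ → Submodule K (MvPolynomial (Fin 2) K)
  | 0 => ⊤
  | n + 1 => Submodule.span K
      {x | ∃ a ∈ hamUpperDerivedSeries K n, ∃ b ∈ hamUpperDerivedSeries K n,
        ∃ c : MvPolynomial (Fin 2) K, x = hamBracket a b * c}

section aux
set_option linter.unusedSectionVars false

variable {K : Type*} [Field K] [CharP K 2]

/-- In characteristic 2, second partial derivatives in the same variable vanish. -/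
lemma pderiv_pderiv_self (i : Fin 2) (f : MvPolynomial (Fin 2) K) :
    pderiv i (pderiv i f) = 0 := by
  induction f using MvPolynomial.induction_on' with
  | monomial s a =>
    rw [pderiv_monomial, pderiv_monomial]
    have hs : (s - Finsupp.single i 1 : Fin 2 →₀ ℕ) i = s i - 1 := by
      simp
    rw [hs]
    have : ((s i : K)) * ((s i - 1 : ℕ) : K) = 0 := by
      rw [← Nat.cast_mul, CharP.cast_eq_zero_iff K 2]
      rcases Nat.even_or_odd (s i) with h | h
      · exact (h.mul_right _).two_dvd
      · exact ((Nat.Odd.sub_odd h odd_one).mul_left _).two_dvd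
    rw [mul_assoc, this, mul_zero, map_zero]
  | add p q hp hq => simp [hp, hq]

/-- Mixed partials commute. -/
lemma pderiv_comm01 (f : MvPolynomial (Fin 2) K) :
    pderiv (1 : Fin 2) (pderiv (0 : Fin 2) f) = pderiv 0 (pderiv 1 f) := by
  induction f using MvPolynomial.induction_on' with
  | monomial s a =>
    rw [pderiv_monomial, pderiv_monomial, pderiv_monomial, pderiv_monomial]
    have h1 : (s - Finsupp.single (0 : Fin 2) 1 : Fin 2 →₀ ℕ) 1 = s 1 := by
      simp [Finsupp.sub_apply, Finsupp.single_apply]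
    have h2 : (s - Finsupp.single (1 : Fin 2) 1 : Fin 2 →₀ ℕ) 0 = s 0 := by
      simp [Finsupp.sub_apply, Finsupp.single_apply]
    rw [h1, h2, tsub_tsub, tsub_tsub, add_comm]
    ring_nf
  | add p q hp hq => simp [hp, hq]

lemma pderiv01_hamBracket (f g : MvPolynomial (Fin 2) K) :
    pderiv (0 : Fin 2) (pderiv (1 : Fin 2) (hamBracket f g)) = 0 := by
  simp only [hamBracket, map_sub, pderiv_mul, map_add, pderiv_pderiv_self,
    pderiv_comm01, mul_zero, zero_mul, add_zero, zero_add]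
  ring

lemma mem_one_pderiv01 {x : MvPolynomial (Fin 2) K}
    (hx : x ∈ hamDerivedSeries K 1) :
    pderiv (0 : Fin 2) (pderiv (1 : Fin 2) x) = 0 := by
  have hle : hamDerivedSeries K 1 ≤
      LinearMap.ker ((pderiv (0 : Fin 2) : Derivation K (MvPolynomial (Fin 2) K) _).toLinearMap ∘ₗ
        (pderiv (1 : Fin 2) : Derivation K (MvPolynomial (Fin 2) K) _).toLinearMap) := by
    show Submodule.span K _ ≤ _
    rw [Submodule.span_le]
    rintro x ⟨a, -, b, -, rfl⟩
    simpa using pderiv01_hamBracket a b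
  simpa using hle hx

lemma mem_two_pderiv {x : MvPolynomial (Fin 2) K}
    (hx : x ∈ hamDerivedSeries K 2) :
    pderiv (0 : Fin 2) x = 0 ∧ pderiv (1 : Fin 2) x = 0 := by
  have hle : hamDerivedSeries K 2 ≤
      LinearMap.ker (pderiv (0 : Fin 2) : Derivation K (MvPolynomial (Fin 2) K) _).toLinearMap ⊓
        LinearMap.ker (pderiv (1 : Fin 2) : Derivation K (MvPolynomial (Fin 2) K) _).toLinearMap := by
    show Submodule.span K _ ≤ _
    rw [Submodule.span_le]
    rintro x ⟨a, ha, b, hb, rfl⟩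
    have ha01 := mem_one_pderiv01 ha
    have hb01 := mem_one_pderiv01 hb
    have ha10 : pderiv (1 : Fin 2) (pderiv (0 : Fin 2) a) = 0 := by
      rw [pderiv_comm01]; exact ha01
    have hb10 : pderiv (1 : Fin 2) (pderiv (0 : Fin 2) b) = 0 := by
      rw [pderiv_comm01]; exact hb01
    constructor <;> simp [hamBracket, pderiv_mul, pderiv_pderiv_self,
      ha01, hb01, ha10, hb10]
  have := hle hx
  exact ⟨this.1, this.2⟩

lemma X0_mem_one : (X 0 : MvPolynomial (Fin 2) K) ∈ hamDerivedSeries K 1 := by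
  apply Submodule.subset_span
  refine ⟨X 0, trivial, X 0 * X 1, trivial, ?_⟩
  simp [hamBracket, pderiv_mul, pderiv_X_self, pderiv_X_of_ne (show (0:Fin 2) ≠ 1 by decide),
    pderiv_X_of_ne (show (1:Fin 2) ≠ 0 by decide)]

lemma X1_mem_one : (X 1 : MvPolynomial (Fin 2) K) ∈ hamDerivedSeries K 1 := by
  apply Submodule.subset_span
  refine ⟨X 0 * X 1, trivial, X 1, trivial, ?_⟩
  simp [hamBracket, pderiv_mul, pderiv_X_self, pderiv_X_of_ne (show (0:Fin 2) ≠ 1 by decide),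
    pderiv_X_of_ne (show (1:Fin 2) ≠ 0 by decide)]

lemma hamBracket_X01 : hamBracket (X 0 : MvPolynomial (Fin 2) K) (X 1) = 1 := by
  simp [hamBracket, pderiv_X_self, pderiv_X_of_ne (show (0:Fin 2) ≠ 1 by decide),
    pderiv_X_of_ne (show (1:Fin 2) ≠ 0 by decide)]

lemma upper_eq_top (s : ℕ) : hamUpperDerivedSeries K s = ⊤ := by
  induction s with
  | zero => rfl
  | succ n ih =>
    rw [eq_top_iff]
    intro x _
    apply Submodule.subset_span
    refine ⟨X 0, by rw [ih]; trivial, X 1, by rw [ih]; trivial, x, ?_⟩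
    rw [hamBracket_X01, one_mul]

end aux

/-- Monteiro Alves–Petrogradsky: over a field of characteristic `2`, the Hamiltonian Poisson
algebra `H₂ = K[X,Y]` is solvable of length `3` (`δ_3 = 0` and `δ_2 ≠ 0`), but not strongly
solvable (`δ̃_s ≠ 0` for every `s`). -/
theorem hamiltonian_solvable_not_stronglySolvable_char_two
    (K : Type*) [Field K] [CharP K 2] :
    hamDerivedSeries K 3 = ⊥ ∧ hamDerivedSeries K 2 ≠ ⊥ ∧
      ∀ s : ℕ, hamUpperDerivedSeries K s ≠ ⊥ := by
  refine ⟨?_, ?_, ?_⟩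
  · rw [eq_bot_iff]
    show Submodule.span K _ ≤ ⊥
    rw [Submodule.span_le]
    rintro x ⟨a, ha, b, hb, rfl⟩
    obtain ⟨ha0, ha1⟩ := mem_two_pderiv ha
    obtain ⟨hb0, hb1⟩ := mem_two_pderiv hb
    simp [hamBracket, ha0, ha1, hb0, hb1, Submodule.mem_bot]
  · intro h
    have h1 : (1 : MvPolynomial (Fin 2) K) ∈ hamDerivedSeries K 2 := by
      apply Submodule.subset_span
      exact ⟨X 0, X0_mem_one, X 1, X1_mem_one, hamBracket_X01.symm⟩
    rw [h, Submodule.mem_bot] at h1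
    exact one_ne_zero h1
  · intro s h
    rw [upper_eq_top s] at h
    exact absurd h (by simp)
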